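/- Let R be monotone with ν(R(∅)) = 0 and satisfying the Fatou property, and 0 < p < ∞. Then R is a measure preserving transformation (μ(E) = ν(R(E)) for all E ∈ Σ_X) if and only if for all measurable f, ∫_X |f|^p dμ = ∫_Y (f*_R)^p dν; i.e. Λ^p_R(1) = L^p(X) with equality of norms. -/

import Mathlib

open MeasureTheory Set Filter
open scoped ENNReal NNReal

/-- The rearrangement of `f` with respect to the set transformation `R`. -/
noncomputable def rearr {X Y : Type*} (R : Set X → Set Y) (f : X → ℝ) (y : Y) : ℝ≥0∞ :=
  ∫⁻ t in Set.Ioi (0 : ℝ), (R {x | t < |f x|}).indicator (fun _ => (1 : ℝ≥0∞)) y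

lemma lint_ind_one {α : Type*} [MeasurableSpace α] {μ : Measure α} {s : Set α}
    (hs : MeasurableSet s) :
    ∫⁻ a, s.indicator (fun _ => (1:ℝ≥0∞)) a ∂μ = μ s := by
  rw [lintegral_indicator_const hs, one_mul]

/-- Superlevel sets of the rearrangement are images under `R` of superlevel sets of `|f|`. -/
lemma rearr_superlevel {X Y : Type*} (R : Set X → Set Y)
    (hRmono : ∀ E F : Set X, E ⊆ F → R E ⊆ R F)
    (hRunion : ∀ A : ℕ → Set X, Monotone A → R (⋃ j, A j) = ⋃ j, R (A j))
    (f : X → ℝ) {s : ℝ} (hs : 0 ≤ s) :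
    {y | ENNReal.ofReal s < rearr R f y} = R {x | s < |f x|} := by
  ext y
  simp only [mem_setOf_eq]
  constructor
  · intro h
    by_contra hy
    have hle : rearr R f y ≤ ENNReal.ofReal s := by
      have hb : ∀ t ∈ Ioi (0:ℝ),
          (R {x | t < |f x|}).indicator (fun _ => (1:ℝ≥0∞)) y
            ≤ (Ioc (0:ℝ) s).indicator (fun _ => (1:ℝ≥0∞)) t := by
        intro t ht
        by_cases hts : t ≤ s
        · have htmem : t ∈ Ioc (0:ℝ) s := ⟨ht, hts⟩
          rw [indicator_of_mem htmem]
          by_cases hm : y ∈ R {x | t < |f x|}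
          · rw [indicator_of_mem hm]
          · rw [indicator_of_notMem hm]; exact zero_le
        · push_neg at hts
          have hsub : {x | t < |f x|} ⊆ {x | s < |f x|} := fun x hx => lt_trans hts hx
          have hnm : y ∉ R {x | t < |f x|} := fun hmem => hy (hRmono _ _ hsub hmem)
          rw [indicator_of_notMem hnm]
          exact zero_le
      calc rearr R f y
          ≤ ∫⁻ t in Ioi (0:ℝ), (Ioc (0:ℝ) s).indicator (fun _ => (1:ℝ≥0∞)) t :=
            setLIntegral_mono' measurableSet_Ioi hb
        _ = ENNReal.ofReal s := by
            rw [lint_ind_one measurableSet_Ioc,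
              Measure.restrict_apply measurableSet_Ioc,
              inter_eq_self_of_subset_left Ioc_subset_Ioi_self, Real.volume_Ioc, sub_zero]
    exact absurd h (not_lt.2 hle)
  · intro hy
    obtain ⟨n, hn⟩ : ∃ n : ℕ, y ∈ R {x | s + 1/(n+1:ℝ) < |f x|} := by
      have hA : Monotone (fun n : ℕ => {x | s + 1/(n+1:ℝ) < |f x|}) := by
        intro n m hnm x hx
        simp only [mem_setOf_eq] at hx ⊢
        have h1 : (1:ℝ)/(m+1) ≤ 1/(n+1) := by
          apply one_div_le_one_div_of_le
          · positivity
          · have : (n:ℝ) ≤ m := Nat.cast_le.2 hnm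
            linarith
        linarith
      have hU : (⋃ n : ℕ, {x | s + 1/(n+1:ℝ) < |f x|}) = {x | s < |f x|} := by
        ext x
        simp only [mem_iUnion, mem_setOf_eq]
        constructor
        · rintro ⟨n, hn⟩
          have h0 : (0:ℝ) < 1/(n+1) := by positivity
          linarith
        · intro hx
          obtain ⟨n, hn⟩ := exists_nat_one_div_lt (sub_pos.2 hx)
          exact ⟨n, by linarith⟩
      rw [← hU, hRunion _ hA] at hy
      exact mem_iUnion.mp hy
    set t₀ := s + 1/(n+1:ℝ) with ht₀
    have hpos : (0:ℝ) < 1/(n+1) := by positivity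
    have ht₀pos : 0 < t₀ := by rw [ht₀]; linarith
    have hge : ENNReal.ofReal t₀ ≤ rearr R f y := by
      have hb : ∀ t ∈ Ioi (0:ℝ),
          (Ioc (0:ℝ) t₀).indicator (fun _ => (1:ℝ≥0∞)) t
            ≤ (R {x | t < |f x|}).indicator (fun _ => (1:ℝ≥0∞)) y := by
        intro t ht
        by_cases htt : t ∈ Ioc (0:ℝ) t₀
        · rw [indicator_of_mem htt]
          have hsub : {x | t₀ < |f x|} ⊆ {x | t < |f x|} :=
            fun x hx => lt_of_le_of_lt htt.2 hx
          have hm : y ∈ R {x | t < |f x|} := hRmono _ _ hsub hn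
          rw [indicator_of_mem hm]
        · rw [indicator_of_notMem htt]; exact zero_le
      calc ENNReal.ofReal t₀
          = ∫⁻ t in Ioi (0:ℝ), (Ioc (0:ℝ) t₀).indicator (fun _ => (1:ℝ≥0∞)) t := by
            rw [lint_ind_one measurableSet_Ioc,
              Measure.restrict_apply measurableSet_Ioc,
              inter_eq_self_of_subset_left Ioc_subset_Ioi_self, Real.volume_Ioc, sub_zero]
        _ ≤ rearr R f y := setLIntegral_mono' measurableSet_Ioi hb
    calc ENNReal.ofReal s < ENNReal.ofReal t₀ := by
          rw [ENNReal.ofReal_lt_ofReal_iff ht₀pos, ht₀]; linarith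
      _ ≤ rearr R f y := hge

lemma rearr_measurable {X Y : Type*} [MeasurableSpace X] [MeasurableSpace Y] (R : Set X → Set Y)
    (hRmono : ∀ E F : Set X, E ⊆ F → R E ⊆ R F)
    (hRmeas : ∀ A : Set X, MeasurableSet A → MeasurableSet (R A))
    (hRunion : ∀ A : ℕ → Set X, Monotone A → R (⋃ j, A j) = ⋃ j, R (A j))
    (f : X → ℝ) (hf : Measurable f) :
    Measurable (rearr R f) := by
  apply measurable_of_Ioi
  intro a
  rcases eq_or_ne a ∞ with rfl | ha
  · have : rearr R f ⁻¹' Ioi ∞ = ∅ := by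
      ext y; simp
    rw [this]; exact MeasurableSet.empty
  · have : rearr R f ⁻¹' Ioi a = R {x | a.toReal < |f x|} := by
      rw [← rearr_superlevel R hRmono hRunion f ENNReal.toReal_nonneg,
        ENNReal.ofReal_toReal ha]
      rfl
    rw [this]
    exact hRmeas _ (measurableSet_lt measurable_const hf.abs)

/-- Layer-cake formula for `ℝ≥0∞`-valued functions. -/
lemma lintegral_eq_layer {α : Type*} [MeasurableSpace α] (μ : Measure α) [SigmaFinite μ]
    (g : α → ℝ≥0∞) (hg : Measurable g) :
    ∫⁻ x, g x ∂μ = ∫⁻ t in Ioi (0:ℝ), μ {x | ENNReal.ofReal t < g x} := by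
  set S : Set (α × ℝ) := {p : α × ℝ | ENNReal.ofReal p.2 < g p.1} with hS
  have hmset : MeasurableSet S :=
    measurableSet_lt (ENNReal.measurable_ofReal.comp measurable_snd) (hg.comp measurable_fst)
  have hmeasF : Measurable (S.indicator (fun _ => (1:ℝ≥0∞))) :=
    measurable_const.indicator hmset
  have key := lintegral_lintegral_swap (μ := μ) (ν := volume.restrict (Ioi (0:ℝ)))
      (f := fun x t => S.indicator (fun _ => (1:ℝ≥0∞)) (x, t)) hmeasF.aemeasurable
  have hinner1 : ∀ x, (∫⁻ t in Ioi (0:ℝ), S.indicator (fun _ => (1:ℝ≥0∞)) (x, t)) = g x := by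
    intro x
    have hT : MeasurableSet {t : ℝ | ENNReal.ofReal t < g x} :=
      ENNReal.measurable_ofReal measurableSet_Iio
    have heq : ∀ t : ℝ, S.indicator (fun _ => (1:ℝ≥0∞)) (x, t)
        = ({t : ℝ | ENNReal.ofReal t < g x}).indicator (fun _ => (1:ℝ≥0∞)) t := by
      intro t
      simp only [indicator_apply, hS, mem_setOf_eq]
    simp only [heq]
    rw [lint_ind_one hT, Measure.restrict_apply hT]
    rcases eq_or_ne (g x) ∞ with hgx | hgx
    · have : {t : ℝ | ENNReal.ofReal t < g x} ∩ Ioi 0 = Ioi 0 := by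
        rw [hgx]
        ext t
        simp [ENNReal.ofReal_lt_top]
      rw [this, Real.volume_Ioi, hgx]
    · have : {t : ℝ | ENNReal.ofReal t < g x} ∩ Ioi 0 = Ioo 0 (g x).toReal := by
        ext t
        simp only [mem_inter_iff, mem_setOf_eq, mem_Ioi, mem_Ioo]
        constructor
        · rintro ⟨h1, h2⟩
          exact ⟨h2, (ENNReal.ofReal_lt_iff_lt_toReal h2.le hgx).1 h1⟩
        · rintro ⟨h1, h2⟩
          exact ⟨(ENNReal.ofReal_lt_iff_lt_toReal h1.le hgx).2 h2, h1⟩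
      rw [this, Real.volume_Ioo, sub_zero, ENNReal.ofReal_toReal hgx]
  have hinner2 : ∀ t : ℝ, (∫⁻ x, S.indicator (fun _ => (1:ℝ≥0∞)) (x, t) ∂μ)
      = μ {x | ENNReal.ofReal t < g x} := by
    intro t
    have hT : MeasurableSet {x : α | ENNReal.ofReal t < g x} := hg measurableSet_Ioi
    have heq : ∀ x : α, S.indicator (fun _ => (1:ℝ≥0∞)) (x, t)
        = ({x : α | ENNReal.ofReal t < g x}).indicator (fun _ => (1:ℝ≥0∞)) x := by
      intro x
      simp only [indicator_apply, hS, mem_setOf_eq]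
    simp only [heq]
    rw [lint_ind_one hT]
  calc ∫⁻ x, g x ∂μ
      = ∫⁻ x, (∫⁻ t in Ioi (0:ℝ), S.indicator (fun _ => (1:ℝ≥0∞)) (x, t)) ∂μ :=
        lintegral_congr fun x => (hinner1 x).symm
    _ = ∫⁻ t in Ioi (0:ℝ), ∫⁻ x, S.indicator (fun _ => (1:ℝ≥0∞)) (x, t) ∂μ := key
    _ = ∫⁻ t in Ioi (0:ℝ), μ {x | ENNReal.ofReal t < g x} :=
        lintegral_congr fun t => hinner2 t

theorem stmt15 {X Y : Type*} [MeasurableSpace X] [MeasurableSpace Y]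
    (μ : Measure X) (ν : Measure Y) [SigmaFinite μ] [SigmaFinite ν]
    (R : Set X → Set Y)
    (hRmono : ∀ E F : Set X, E ⊆ F → R E ⊆ R F) (hR0 : ν (R ∅) = 0)
    (hRmeas : ∀ A : Set X, MeasurableSet A → MeasurableSet (R A))
    (hRunion : ∀ A : ℕ → Set X, Monotone A → R (⋃ j, A j) = ⋃ j, R (A j))
    (p : ℝ) (hp : 0 < p) :
    (∀ E : Set X, MeasurableSet E → ν (R E) = μ E) ↔
      (∀ f : X → ℝ, Measurable f →
        ∫⁻ x, ENNReal.ofReal |f x| ^ p ∂μ = ∫⁻ y, rearr R f y ^ p ∂ν) := by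
  constructor
  · -- measure preserving implies equality of integrals
    intro hmp f hf
    have hG : Measurable fun x => ENNReal.ofReal |f x| :=
      ENNReal.measurable_ofReal.comp hf.abs
    have hH : Measurable (rearr R f) :=
      rearr_measurable R hRmono hRmeas hRunion f hf
    have hGp : Measurable fun x => ENNReal.ofReal |f x| ^ p :=
      ENNReal.continuous_rpow_const.measurable.comp hG
    have hHp : Measurable fun y => rearr R f y ^ p :=
      ENNReal.continuous_rpow_const.measurable.comp hH
    rw [lintegral_eq_layer μ _ hGp, lintegral_eq_layer ν _ hHp]
    apply setLIntegral_congr_fun measurableSet_Ioi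
    intro t ht
    have ht' : (0:ℝ) < t := ht
    set s := t ^ (1/p) with hs
    have hspos : 0 < s := Real.rpow_pos_of_pos ht' _
    have hsp : s ^ p = t := by
      rw [hs, ← Real.rpow_mul ht'.le, one_div_mul_cancel hp.ne', Real.rpow_one]
    have hofReal : ENNReal.ofReal t = ENNReal.ofReal s ^ p := by
      rw [← hsp, ENNReal.ofReal_rpow_of_pos hspos]
    have h1 : {x | ENNReal.ofReal t < ENNReal.ofReal |f x| ^ p} = {x | s < |f x|} := by
      ext x
      simp only [mem_setOf_eq]
      rw [hofReal, ENNReal.rpow_lt_rpow_iff hp,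
        ENNReal.ofReal_lt_ofReal_iff_of_nonneg hspos.le]
    have h2 : {y | ENNReal.ofReal t < rearr R f y ^ p} = R {x | s < |f x|} := by
      rw [← rearr_superlevel R hRmono hRunion f hspos.le]
      ext y
      simp only [mem_setOf_eq]
      rw [hofReal, ENNReal.rpow_lt_rpow_iff hp]
    beta_reduce
    rw [h1, h2]
    exact (hmp _ (measurableSet_lt measurable_const hf.abs)).symm
  · -- equality of integrals implies measure preserving
    intro hint E hE
    set f : X → ℝ := E.indicator fun _ => (1:ℝ) with hfdef
    have hf : Measurable f := measurable_const.indicator hE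
    have hkey := hint f hf
    -- LHS equals μ E
    have hLHS : ∫⁻ x, ENNReal.ofReal |f x| ^ p ∂μ = μ E := by
      have heq : ∀ x, ENNReal.ofReal |f x| ^ p = E.indicator (fun _ => (1:ℝ≥0∞)) x := by
        intro x
        by_cases hx : x ∈ E
        · simp [hfdef, indicator_of_mem hx]
        · simp [hfdef, indicator_of_notMem hx, ENNReal.zero_rpow_of_pos hp]
      rw [lintegral_congr heq, lint_ind_one hE]
    -- a.e. pointwise description of rearr
    have hae : ∀ᵐ y ∂ν, y ∉ R ∅ := by
      rw [ae_iff]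
      simpa using hR0
    have hpt : ∀ y, y ∉ R ∅ → rearr R f y = (R E).indicator (fun _ => (1:ℝ≥0∞)) y := by
      intro y hy
      unfold rearr
      have hcong : ∀ t ∈ Ioi (0:ℝ),
          (R {x | t < |f x|}).indicator (fun _ => (1:ℝ≥0∞)) y
            = (Ioo (0:ℝ) 1).indicator
                (fun _ => (R E).indicator (fun _ => (1:ℝ≥0∞)) y) t := by
        intro t ht
        by_cases ht1 : t < 1
        · have hset : {x | t < |f x|} = E := by
            ext x
            by_cases hx : x ∈ E
            · simp [hfdef, indicator_of_mem hx, ht1, hx]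
            · simp [hfdef, indicator_of_notMem hx, hx, not_lt.2 (le_of_lt (mem_Ioi.mp ht))]
          have htm : t ∈ Ioo (0:ℝ) 1 := ⟨ht, ht1⟩
          rw [hset, indicator_of_mem htm]
        · have hset : {x | t < |f x|} = (∅ : Set X) := by
            ext x
            by_cases hx : x ∈ E
            · simp only [hfdef, indicator_of_mem hx, mem_setOf_eq, mem_empty_iff_false,
                iff_false, abs_one, not_lt]
              linarith [not_lt.1 ht1]
            · simp only [hfdef, indicator_of_notMem hx, mem_setOf_eq, mem_empty_iff_false,
                iff_false, abs_zero, not_lt]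
              exact le_of_lt ht
          have hni : t ∉ Ioo (0:ℝ) 1 := fun h => ht1 h.2
          rw [hset, indicator_of_notMem hni, indicator_of_notMem hy]
      rw [setLIntegral_congr_fun measurableSet_Ioi hcong,
        lintegral_indicator_const measurableSet_Ioo,
        Measure.restrict_apply measurableSet_Ioo,
        inter_eq_self_of_subset_left Ioo_subset_Ioi_self, Real.volume_Ioo, sub_zero,
        ENNReal.ofReal_one, mul_one]
    -- RHS equals ν (R E)
    have hRHS : ∫⁻ y, rearr R f y ^ p ∂ν = ν (R E) := by
      have hcong : ∀ᵐ y ∂ν, rearr R f y ^ p = (R E).indicator (fun _ => (1:ℝ≥0∞)) y := by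
        filter_upwards [hae] with y hy
        rw [hpt y hy]
        by_cases hyE : y ∈ R E
        · simp [indicator_of_mem hyE]
        · simp [indicator_of_notMem hyE, ENNReal.zero_rpow_of_pos hp]
      rw [lintegral_congr_ae hcong, lint_ind_one (hRmeas E hE)]
    rw [hLHS, hRHS] at hkey
    exact hkey.symm
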